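/- The integral ∫_1^∞ (1/ω(λ)) exp{ ∫_1^λ φ(z)/ω(z) dz } dλ is infinite if and only if 2δ ≥ σ². -/

import Mathlib

open MeasureTheory Set

set_option maxHeartbeats 3000000

/-- The integral ∫_1^∞ (1/ω(λ)) exp{∫_1^λ φ(z)/ω(z) dz} dλ is infinite iff 2δ ≥ σ². -/
theorem stmt_7
    (μ : Measure ℝ) (δ c σ : ℝ)
    (hμ0 : μ (Iic 0) = 0)
    (hμint : ∫⁻ u in Ioi (0:ℝ), ENNReal.ofReal (min 1 u) ∂μ < ⊤)
    (hδ : 0 ≤ δ) (hc : 0 < c) (hσ : 0 < σ)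
    (φ ω : ℝ → ℝ)
    (hφ : ∀ z, φ z = δ * z + ∫ u in Ioi (0:ℝ), (1 - Real.exp (-(z * u))) ∂μ)
    (hω : ∀ z, ω z = c * z + σ ^ 2 * z ^ 2 / 2) :
    (∫⁻ lam in Ioi (1:ℝ),
        ENNReal.ofReal ((1 / ω lam) * Real.exp (∫ z in (1:ℝ)..lam, φ z / ω z))) = ⊤ ↔
      σ ^ 2 ≤ 2 * δ := by
  set I : ℝ → ℝ := fun z => ∫ u in Ioi (0:ℝ), (1 - Real.exp (-(z * u))) ∂μ with hIdef
  have hσ2 : (0:ℝ) < σ ^ 2 := by positivity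
  have hφ' : ∀ z, φ z = δ * z + I z := hφ
  -- integrability of min 1 u
  have hmin_int : IntegrableOn (fun u : ℝ => min 1 u) (Ioi 0) μ := by
    refine ⟨(measurable_const.min measurable_id).aestronglyMeasurable, ?_⟩
    have h : ∫⁻ u in Ioi (0:ℝ), ‖min 1 u‖₊ ∂μ = ∫⁻ u in Ioi (0:ℝ), ENNReal.ofReal (min 1 u) ∂μ := by
      refine setLIntegral_congr_fun measurableSet_Ioi (fun u hu => ?_)
      exact Real.enorm_eq_ofReal (le_min zero_le_one hu.le)
    exact h.trans_lt hμint
  -- pointwise bounds on the integrand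
  have hbdd : ∀ z u : ℝ, 0 ≤ z → 0 < u →
      0 ≤ 1 - Real.exp (-(z * u)) ∧ 1 - Real.exp (-(z * u)) ≤ (1 + z) * min 1 u := by
    intro z u hz hu
    have hzu : 0 ≤ z * u := mul_nonneg hz hu.le
    constructor
    · have : Real.exp (-(z * u)) ≤ 1 := Real.exp_le_one_iff.mpr (by linarith)
      linarith
    · have h1 : 1 - Real.exp (-(z * u)) ≤ 1 := by
        have := Real.exp_pos (-(z * u)); linarith
    -- also ≤ z * u
      have h2 : 1 - Real.exp (-(z * u)) ≤ z * u := by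
        have := Real.add_one_le_exp (-(z * u)); linarith
      rcases le_or_gt 1 u with h | h
      · rw [min_eq_left h]
        nlinarith
      · rw [min_eq_right h.le]
        nlinarith
  have hI_cont : ∀ x₀ : ℝ, 0 < x₀ → ContinuousAt I x₀ := by
    intro x₀ hx₀
    show ContinuousAt (fun z : ℝ => ∫ u in Ioi (0:ℝ), (1 - Real.exp (-(z * u))) ∂μ) x₀
    refine continuousAt_of_dominated (μ := μ.restrict (Ioi 0))
      (F := fun z u => 1 - Real.exp (-(z * u))) (bound := fun u => (2 + x₀) * min 1 u)
      (Filter.Eventually.of_forall fun z => (Continuous.aestronglyMeasurable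
        (continuous_const.sub (((continuous_const.mul continuous_id).neg).rexp))))
      ?_ (hmin_int.const_mul _)
      (ae_of_all _ fun u =>
        (continuous_const.sub (((continuous_id.mul continuous_const).neg).rexp)).continuousAt)
    · have hev : ∀ᶠ z in nhds x₀, z ∈ Ioo 0 (x₀ + 1) :=
        Ioo_mem_nhds hx₀ (by linarith)
      filter_upwards [hev] with z hz
      rw [ae_restrict_iff' measurableSet_Ioi]
      refine ae_of_all _ fun u hu => ?_
      rcases hbdd z u hz.1.le hu with ⟨h0, h1⟩
      rw [Real.norm_eq_abs, abs_of_nonneg h0]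
      refine h1.trans ?_
      have hm : (0:ℝ) ≤ min 1 u := le_min zero_le_one hu.le
      nlinarith [hz.2]
  have hIint : ∀ z : ℝ, 0 ≤ z → IntegrableOn (fun u => 1 - Real.exp (-(z * u))) (Ioi 0) μ := by
    intro z hz
    refine Integrable.mono' (hmin_int.const_mul (1 + z)) ?_ ?_
    · exact Continuous.aestronglyMeasurable
        (continuous_const.sub (((continuous_const.mul continuous_id).neg).rexp))
    · rw [ae_restrict_iff' measurableSet_Ioi]
      refine ae_of_all _ fun u hu => ?_
      rcases hbdd z u hz hu with ⟨h0, h1⟩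
      rw [Real.norm_eq_abs, abs_of_nonneg h0]; exact h1
  have hI_nonneg : ∀ z : ℝ, 0 ≤ z → 0 ≤ I z := by
    intro z hz
    refine setIntegral_nonneg measurableSet_Ioi fun u hu => (hbdd z u hz hu).1
  have hI_mono : ∀ z₁ z₂ : ℝ, 0 ≤ z₁ → z₁ ≤ z₂ → I z₁ ≤ I z₂ := by
    intro z₁ z₂ h1 h12
    refine setIntegral_mono_on (hIint z₁ h1) (hIint z₂ (h1.trans h12)) measurableSet_Ioi
      fun u hu => ?_
    have : Real.exp (-(z₂ * u)) ≤ Real.exp (-(z₁ * u)) := by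
      apply Real.exp_le_exp.mpr
      have : (0:ℝ) < u := hu
      nlinarith
    linarith
  have hI_bound : ∀ z : ℝ, 0 ≤ z → I z ≤ (1 + z) * ∫ u in Ioi (0:ℝ), min 1 u ∂μ := by
    intro z hz
    rw [← integral_const_mul]
    exact setIntegral_mono_on (hIint z hz) (hmin_int.const_mul _) measurableSet_Ioi
      fun u hu => (hbdd z u hz hu).2
  -- positivity of ω
  have hωpos : ∀ z : ℝ, 0 < z → 0 < ω z := by
    intro z hz; rw [hω]; positivity
  have hωcont : Continuous ω := by
    have : ω = fun z => c * z + σ ^ 2 * z ^ 2 / 2 := funext hω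
    rw [this]
    exact (continuous_const.mul continuous_id).add
      (((continuous_const.mul ((continuous_pow 2))).div_const 2))
  have hφcontOn : ContinuousOn φ (Ioi 0) := by
    have : φ = fun z => δ * z + I z := funext hφ'
    rw [this]
    intro z hz
    exact ((continuous_const.mul continuous_id).continuousAt.add (hI_cont z hz)).continuousWithinAt
  have hratio_cont : ContinuousOn (fun z => φ z / ω z) (Ioi 0) :=
    hφcontOn.div (hωcont.continuousOn) fun z hz => (hωpos z hz).ne'
  have hII : ∀ t : ℝ, 1 ≤ t → IntervalIntegrable (fun z => φ z / ω z) volume 1 t := by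
    intro t ht
    apply (hratio_cont.mono ?_).intervalIntegrable
    rw [uIcc_of_le ht]
    intro z hz
    exact lt_of_lt_of_le one_pos hz.1
  have hφ_ge : ∀ z : ℝ, 0 < z → δ * z ≤ φ z := by
    intro z hz; rw [hφ']; nlinarith [hI_nonneg z hz.le]
  have hφ_nonneg : ∀ z : ℝ, 0 < z → 0 ≤ φ z := by
    intro z hz; exact le_trans (by positivity) (hφ_ge z hz)
  -- bounds on ω for z ≥ 1
  have hω_lb : ∀ z : ℝ, 1 ≤ z → σ ^ 2 * z ^ 2 / 2 ≤ ω z := by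
    intro z hz; rw [hω]; nlinarith
  have hω_ub : ∀ z : ℝ, 1 ≤ z → ω z ≤ (c + σ ^ 2 / 2) * z ^ 2 := by
    intro z hz; rw [hω]
    have h1 : (0:ℝ) ≤ z ^ 2 - z := by nlinarith
    nlinarith [mul_nonneg hc.le h1]
  have hωc : ∀ z : ℝ, 1 ≤ z → c ≤ ω z := by
    intro z hz; rw [hω]; nlinarith
  set K : ℝ := 4 * δ * c / σ ^ 4 with hK
  have hK0 : 0 ≤ K := by positivity
  have h0uIcc : ∀ t : ℝ, 1 ≤ t → (0:ℝ) ∉ uIcc 1 t := by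
    intro t ht
    rw [uIcc_of_le ht]
    rintro ⟨h, -⟩; linarith
  -- lower bound on the inner integral
  have hlow : ∀ lam : ℝ, 1 ≤ lam →
      2 * δ / σ ^ 2 * Real.log lam - K ≤ ∫ z in (1:ℝ)..lam, φ z / ω z := by
    intro lam hlam
    have hIa : IntervalIntegrable (fun z : ℝ => 2 * δ / σ ^ 2 * z⁻¹) volume 1 lam := by
      apply ContinuousOn.intervalIntegrable
      intro z hz
      have hz0 : z ≠ 0 := fun h => h0uIcc lam hlam (h ▸ hz)
      exact (continuousAt_const.mul (continuousAt_inv₀ hz0)).continuousWithinAt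
    have hIb : IntervalIntegrable (fun z : ℝ => K * z ^ (-2 : ℤ)) volume 1 lam := by
      apply ContinuousOn.intervalIntegrable
      intro z hz
      have hz0 : z ≠ 0 := fun h => h0uIcc lam hlam (h ▸ hz)
      exact (continuousAt_const.mul (continuousAt_zpow₀ z (-2) (Or.inl hz0))).continuousWithinAt
    have heval : (∫ z in (1:ℝ)..lam, (2 * δ / σ ^ 2 * z⁻¹ - K * z ^ (-2 : ℤ)))
        = 2 * δ / σ ^ 2 * Real.log lam - K * (1 - lam⁻¹) := by
      rw [intervalIntegral.integral_sub hIa hIb, intervalIntegral.integral_const_mul,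
        intervalIntegral.integral_const_mul, integral_inv (h0uIcc lam hlam),
        integral_zpow (Or.inr ⟨by norm_num, h0uIcc lam hlam⟩)]
      have hlam0 : lam ≠ 0 := by positivity
      norm_num [div_one]
      exact Or.inl (by ring)
    have hpt : ∀ z ∈ Icc (1:ℝ) lam, 2 * δ / σ ^ 2 * z⁻¹ - K * z ^ (-2 : ℤ) ≤ φ z / ω z := by
      intro z hz
      have hz0 : (0:ℝ) < z := lt_of_lt_of_le one_pos hz.1
      have hωz : 0 < ω z := hωpos z hz0
      have hkey : δ * z / ω z - (2 * δ / σ ^ 2 * z⁻¹ - K * z ^ (-2 : ℤ))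
          = 4 * δ * c ^ 2 / (σ ^ 4 * z * ω z) := by
        have hz2 : (z:ℝ) ^ (-2 : ℤ) = (z ^ 2)⁻¹ := by
          rw [zpow_neg]; exact congrArg Inv.inv (zpow_natCast z 2)
        rw [hz2, hK, hω]
        have h1 : c * z + σ ^ 2 * z ^ 2 / 2 ≠ 0 := by positivity
        field_simp
        ring
      have h2 : δ * z / ω z ≤ φ z / ω z :=
        div_le_div_of_nonneg_right (hφ_ge z hz0) hωz.le
      have h3 : 0 ≤ 4 * δ * c ^ 2 / (σ ^ 4 * z * ω z) := by positivity
      linarith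
    have hmono := intervalIntegral.integral_mono_on hlam
      (hIa.sub hIb) (hII lam hlam) hpt
    rw [heval] at hmono
    have : K * (1 - lam⁻¹) ≤ K := by
      have : (0:ℝ) ≤ lam⁻¹ := by positivity
      nlinarith
    linarith
  -- the divergence direction
  have hdiv : σ ^ 2 ≤ 2 * δ →
      (∫⁻ lam in Ioi (1:ℝ),
        ENNReal.ofReal ((1 / ω lam) * Real.exp (∫ z in (1:ℝ)..lam, φ z / ω z))) = ⊤ := by
    intro h2δ
    set p : ℝ := 2 * δ / σ ^ 2 with hp
    set q : ℝ := p - 2 with hqdef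
    have hq : -1 ≤ q := by
      have : (1:ℝ) ≤ p := (one_le_div hσ2).mpr h2δ
      simp only [hqdef]; linarith
    set C : ℝ := 1 / (Real.exp K * (c + σ ^ 2 / 2)) with hC
    have hC0 : 0 < C := by positivity
    have hptwise : ∀ lam : ℝ, lam ∈ Ioi (1:ℝ) →
        C * lam ^ q ≤ (1 / ω lam) * Real.exp (∫ z in (1:ℝ)..lam, φ z / ω z) := by
      intro lam hlam
      have hlam1 : (1:ℝ) ≤ lam := le_of_lt hlam
      have hlam0 : (0:ℝ) < lam := lt_trans one_pos hlam
      have hωl : 0 < ω lam := hωpos lam hlam0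
      have hexp : Real.exp (p * Real.log lam - K)
          ≤ Real.exp (∫ z in (1:ℝ)..lam, φ z / ω z) :=
        Real.exp_le_exp.mpr (hlow lam hlam1)
      have hrw : Real.exp (p * Real.log lam - K) = lam ^ p / Real.exp K := by
        rw [Real.exp_sub, Real.rpow_def_of_pos hlam0, mul_comm (Real.log lam) p]
      have hωub := hω_ub lam hlam1
      have hden : (0:ℝ) < (c + σ ^ 2 / 2) * lam ^ 2 := by positivity
      have h1 : 1 / ((c + σ ^ 2 / 2) * lam ^ 2) ≤ 1 / ω lam :=
        one_div_le_one_div_of_le hωl hωub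
      have hEnn : 0 < Real.exp (∫ z in (1:ℝ)..lam, φ z / ω z) := Real.exp_pos _
      calc C * lam ^ q
          = 1 / ((c + σ ^ 2 / 2) * lam ^ 2) * (lam ^ p / Real.exp K) := by
            rw [hqdef, Real.rpow_sub hlam0, hC]
            rw [show lam ^ (2:ℝ) = lam ^ (2:ℕ) from Real.rpow_natCast lam 2]
            have h1 : Real.exp K ≠ 0 := (Real.exp_pos K).ne'
            field_simp
        _ ≤ 1 / ((c + σ ^ 2 / 2) * lam ^ 2) *
              Real.exp (∫ z in (1:ℝ)..lam, φ z / ω z) := by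
            rw [← hrw]
            exact mul_le_mul_of_nonneg_left hexp (by positivity)
        _ ≤ 1 / ω lam * Real.exp (∫ z in (1:ℝ)..lam, φ z / ω z) :=
            mul_le_mul_of_nonneg_right h1 hEnn.le
    have hbig : (∫⁻ lam in Ioi (1:ℝ), ENNReal.ofReal (C * lam ^ q)) = ⊤ := by
      by_contra hfin
      have hmeas : AEStronglyMeasurable (fun lam : ℝ => C * lam ^ q)
          (volume.restrict (Ioi (1:ℝ))) := by
        refine ContinuousOn.aestronglyMeasurable ?_ measurableSet_Ioi
        intro x hx
        have hx0 : x ≠ 0 := by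
          have : (1:ℝ) < x := hx
          positivity
        exact (continuousAt_const.mul
          (Real.continuousAt_rpow_const x q (Or.inl hx0))).continuousWithinAt
      have hfi : HasFiniteIntegral (fun lam : ℝ => C * lam ^ q)
          (volume.restrict (Ioi (1:ℝ))) := by
        rw [HasFiniteIntegral]
        have heq : ∫⁻ lam in Ioi (1:ℝ), (‖C * lam ^ q‖₊ : ENNReal)
            = ∫⁻ lam in Ioi (1:ℝ), ENNReal.ofReal (C * lam ^ q) := by
          refine setLIntegral_congr_fun measurableSet_Ioi (fun lam hlam => ?_)
          have hlam0 : (0:ℝ) < lam := lt_trans one_pos hlam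
          exact Real.enorm_eq_ofReal (by positivity)
        refine heq.trans_lt ?_
        exact lt_top_iff_ne_top.mpr hfin
      have hint : IntegrableOn (fun lam : ℝ => C * lam ^ q) (Ioi (1:ℝ)) := ⟨hmeas, hfi⟩
      have hint2 : IntegrableOn (fun lam : ℝ => lam ^ q) (Ioi (1:ℝ)) := by
        have h3 : IntegrableOn (fun x : ℝ => C⁻¹ * (C * x ^ q)) (Ioi (1:ℝ)) :=
          hint.const_mul C⁻¹
        refine h3.congr_fun (fun x hx => ?_) measurableSet_Ioi
        field_simp
      rw [integrableOn_Ioi_rpow_iff zero_lt_one] at hint2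
      linarith
    refine eq_top_iff.mpr ?_
    rw [← hbig]
    refine lintegral_mono_ae ?_
    rw [ae_restrict_iff' measurableSet_Ioi]
    exact ae_of_all _ fun lam hlam => ENNReal.ofReal_le_ofReal (hptwise lam hlam)
  -- the convergence direction
  have hconv : 2 * δ < σ ^ 2 →
      (∫⁻ lam in Ioi (1:ℝ),
        ENNReal.ofReal ((1 / ω lam) * Real.exp (∫ z in (1:ℝ)..lam, φ z / ω z))) < ⊤ := by
    intro hlt
    -- I z / z → 0 at infinity
    have hIz : Filter.Tendsto (fun z => I z / z) Filter.atTop (nhds 0) := by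
      have h0 : Filter.Tendsto
          (fun z : ℝ => ∫ u in Ioi (0:ℝ), (1 - Real.exp (-(z * u))) / z ∂μ)
          Filter.atTop (nhds (∫ u in Ioi (0:ℝ), (0:ℝ) ∂μ)) := by
        refine tendsto_integral_filter_of_dominated_convergence (μ := μ.restrict (Ioi 0))
          (F := fun z u => (1 - Real.exp (-(z * u))) / z) (f := fun _ => (0:ℝ))
          (fun u => min 1 u) ?_ ?_ hmin_int ?_
        · exact Filter.Eventually.of_forall fun z => Continuous.aestronglyMeasurable
            ((continuous_const.sub (((continuous_const.mul continuous_id).neg).rexp)).div_const z)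
        · filter_upwards [Filter.eventually_ge_atTop (1:ℝ)] with z hz1
          rw [ae_restrict_iff' measurableSet_Ioi]
          refine ae_of_all _ fun u hu => ?_
          have hz0 : (0:ℝ) < z := lt_of_lt_of_le one_pos hz1
          rcases hbdd z u hz0.le hu with ⟨hb0, _⟩
          have hF0 : 0 ≤ (1 - Real.exp (-(z * u))) / z := div_nonneg hb0 hz0.le
          rw [Real.norm_eq_abs, abs_of_nonneg hF0]
          rcases le_or_gt 1 u with h | h
          · rw [min_eq_left h, div_le_one hz0]
            have := Real.exp_pos (-(z * u))
            linarith
          · rw [min_eq_right h.le, div_le_iff₀ hz0]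
            have h2' : 1 - Real.exp (-(z * u)) ≤ z * u := by
              have := Real.add_one_le_exp (-(z * u)); linarith
            nlinarith
        · rw [ae_restrict_iff' measurableSet_Ioi]
          refine ae_of_all _ fun u hu => ?_
          refine tendsto_of_tendsto_of_tendsto_of_le_of_le' tendsto_const_nhds
            tendsto_inv_atTop_zero ?_ ?_
          · filter_upwards [Filter.eventually_gt_atTop (0:ℝ)] with z hz
            exact div_nonneg (hbdd z u hz.le hu).1 hz.le
          · filter_upwards [Filter.eventually_gt_atTop (0:ℝ)] with z hz
            rw [div_le_iff₀ hz, inv_mul_cancel₀ hz.ne']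
            have := Real.exp_pos (-(z * u))
            linarith
      rw [integral_zero] at h0
      exact h0.congr fun z => integral_div z _
    have h2δσ : 0 ≤ 2 * δ / σ ^ 2 := by positivity
    have hεσ : 2 * δ / σ ^ 2 < 1 := (div_lt_one hσ2).mpr hlt
    obtain ⟨ε, hε⟩ : ∃ x : ℝ, x = (1 - 2 * δ / σ ^ 2) / 2 := ⟨_, rfl⟩
    have hε0 : 0 < ε := by rw [hε]; linarith
    obtain ⟨p, hp⟩ : ∃ x : ℝ, x = 2 * δ / σ ^ 2 + ε := ⟨_, rfl⟩
    have hp0 : 0 < p := by rw [hp]; linarith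
    obtain ⟨q2, hq2⟩ : ∃ x : ℝ, x = p - 2 := ⟨_, rfl⟩
    have hq2lt : q2 < -1 := by rw [hq2, hp, hε]; linarith
    have hev : ∀ᶠ z : ℝ in Filter.atTop, I z / z < ε * σ ^ 2 / 2 :=
      hIz.eventually_lt_const (by positivity)
    obtain ⟨Z₀, hZ₀⟩ := Filter.eventually_atTop.mp hev
    obtain ⟨Z, hZ⟩ : ∃ x : ℝ, x = max Z₀ 1 := ⟨_, rfl⟩
    have hZ1 : (1:ℝ) ≤ Z := by rw [hZ]; exact le_max_right _ _
    have hZ₀Z : Z₀ ≤ Z := by rw [hZ]; exact le_max_left _ _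
    have hZ0pos : (0:ℝ) < Z := lt_of_lt_of_le one_pos hZ1
    have hIZ : ∀ z : ℝ, Z ≤ z → I z ≤ ε * σ ^ 2 / 2 * z := by
      intro z hz
      have hz0 : (0:ℝ) < z := lt_of_lt_of_le hZ0pos hz
      have h1 := (hZ₀ z (le_trans hZ₀Z hz)).le
      calc I z = I z / z * z := by field_simp
        _ ≤ ε * σ ^ 2 / 2 * z := mul_le_mul_of_nonneg_right h1 hz0.le
    have hub : ∀ z : ℝ, Z ≤ z → φ z / ω z ≤ p * z⁻¹ := by
      intro z hz
      have hz1 : (1:ℝ) ≤ z := le_trans hZ1 hz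
      have hz0 : (0:ℝ) < z := lt_of_lt_of_le one_pos hz1
      have hωz : 0 < ω z := hωpos z hz0
      rw [div_le_iff₀ hωz]
      have hIle := hIZ z hz
      rw [hφ' z, hω z]
      have he1 : p * z⁻¹ * (c * z + σ ^ 2 * z ^ 2 / 2) = p * c + p * σ ^ 2 * z / 2 := by
        field_simp
      rw [he1]
      have he2 : p * σ ^ 2 * z / 2 = δ * z + ε * σ ^ 2 * z / 2 := by
        rw [hp]; field_simp
      have he3 : ε * σ ^ 2 / 2 * z = ε * σ ^ 2 * z / 2 := by ring
      have := mul_pos hp0 hc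
      linarith
    obtain ⟨M, hM⟩ : ∃ x : ℝ, x = ∫ z in (1:ℝ)..Z, φ z / ω z := ⟨_, rfl⟩
    obtain ⟨B, hB⟩ : ∃ x : ℝ, x = (δ * Z + I Z) / c := ⟨_, rfl⟩
    have hB0 : 0 ≤ B := by
      rw [hB]
      exact div_nonneg (add_nonneg (mul_nonneg hδ hZ0pos.le) (hI_nonneg Z hZ0pos.le)) hc.le
    -- bound on the piece (1, Z]
    have hC1 : ∀ lam ∈ Ioc (1:ℝ) Z, (1 / ω lam) * Real.exp (∫ z in (1:ℝ)..lam, φ z / ω z)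
        ≤ (1 / c) * Real.exp ((Z - 1) * B) := by
      intro lam hlam
      have hlam1 : (1:ℝ) ≤ lam := hlam.1.le
      have hωl := hωpos lam (lt_of_lt_of_le one_pos hlam1)
      have hptB : ∀ z ∈ Icc (1:ℝ) lam, φ z / ω z ≤ B := by
        intro z hz
        have hz1 : (1:ℝ) ≤ z := hz.1
        have hz0 : (0:ℝ) < z := lt_of_lt_of_le one_pos hz1
        have hzZ : z ≤ Z := hz.2.trans hlam.2
        have hnum : φ z ≤ δ * Z + I Z := by
          rw [hφ' z]
          exact add_le_add (mul_le_mul_of_nonneg_left hzZ hδ) (hI_mono z Z hz0.le hzZ)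
        have hnum0 : 0 ≤ δ * Z + I Z :=
          add_nonneg (mul_nonneg hδ hZ0pos.le) (hI_nonneg Z hZ0pos.le)
        rw [hB]
        exact div_le_div₀ hnum0 hnum hc (hωc z hz1)
      have hint1 : ∫ z in (1:ℝ)..lam, φ z / ω z ≤ (lam - 1) * B := by
        have h := intervalIntegral.integral_mono_on hlam1 (hII lam hlam1)
          intervalIntegrable_const hptB
        rwa [intervalIntegral.integral_const, smul_eq_mul] at h
      have hexple : Real.exp (∫ z in (1:ℝ)..lam, φ z / ω z) ≤ Real.exp ((Z - 1) * B) := by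
        apply Real.exp_le_exp.mpr
        refine hint1.trans (mul_le_mul_of_nonneg_right (by linarith [hlam.2]) hB0)
      exact mul_le_mul (one_div_le_one_div_of_le hc (hωc lam hlam1)) hexple
        (Real.exp_pos _).le (by positivity)
    -- bound on the piece (Z, ∞)
    obtain ⟨C2, hC2⟩ : ∃ x : ℝ, x = 2 / σ ^ 2 * Real.exp M / Z ^ p := ⟨_, rfl⟩
    have hZp : (0:ℝ) < Z ^ p := Real.rpow_pos_of_pos hZ0pos p
    have hC2bound : ∀ lam ∈ Ioi Z, (1 / ω lam) * Real.exp (∫ z in (1:ℝ)..lam, φ z / ω z)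
        ≤ C2 * lam ^ q2 := by
      intro lam hlam
      have hZlam : Z ≤ lam := le_of_lt hlam
      have hlam1 : (1:ℝ) ≤ lam := hZ1.trans hZlam
      have hlam0 : (0:ℝ) < lam := lt_of_lt_of_le one_pos hlam1
      have hωl := hωpos lam hlam0
      have htailint : IntervalIntegrable (fun z => φ z / ω z) volume Z lam := by
        apply (hratio_cont.mono ?_).intervalIntegrable
        rw [uIcc_of_le hZlam]
        intro x hx
        exact lt_of_lt_of_le hZ0pos hx.1
      have hsplit : (∫ z in (1:ℝ)..lam, φ z / ω z) = M + ∫ z in Z..lam, φ z / ω z := by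
        rw [← intervalIntegral.integral_add_adjacent_intervals (hII Z hZ1) htailint, hM]
      have htail : (∫ z in Z..lam, φ z / ω z) ≤ p * (Real.log lam - Real.log Z) := by
        have hpt2 : ∀ z ∈ Icc Z lam, φ z / ω z ≤ p * z⁻¹ := fun z hz => hub z hz.1
        have hInt2 : IntervalIntegrable (fun z : ℝ => p * z⁻¹) volume Z lam := by
          apply ContinuousOn.intervalIntegrable
          intro x hx
          have hx0 : x ≠ 0 := by
            rw [uIcc_of_le hZlam] at hx
            exact (lt_of_lt_of_le hZ0pos hx.1).ne'
          exact (continuousAt_const.mul (continuousAt_inv₀ hx0)).continuousWithinAt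
        have h := intervalIntegral.integral_mono_on hZlam htailint hInt2 hpt2
        have h0m : (0:ℝ) ∉ uIcc Z lam := by
          rw [uIcc_of_le hZlam]
          rintro ⟨h', -⟩
          linarith [hZ0pos]
        rw [intervalIntegral.integral_const_mul, integral_inv h0m,
          Real.log_div hlam0.ne' hZ0pos.ne'] at h
        exact h
      have hexp : Real.exp (∫ z in (1:ℝ)..lam, φ z / ω z)
          ≤ Real.exp M * (lam / Z) ^ p := by
        rw [hsplit]
        calc Real.exp (M + ∫ z in Z..lam, φ z / ω z)
            ≤ Real.exp (M + p * (Real.log lam - Real.log Z)) :=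
              Real.exp_le_exp.mpr (by linarith)
          _ = Real.exp M * (lam / Z) ^ p := by
              rw [Real.exp_add, Real.rpow_def_of_pos (div_pos hlam0 hZ0pos),
                Real.log_div hlam0.ne' hZ0pos.ne', mul_comm (Real.log lam - Real.log Z) p]
      have h1ω : 1 / ω lam ≤ 2 / (σ ^ 2 * lam ^ 2) := by
        rw [div_le_div_iff₀ hωl (by positivity)]
        nlinarith [hω_lb lam hlam1]
      calc (1 / ω lam) * Real.exp (∫ z in (1:ℝ)..lam, φ z / ω z)
          ≤ (2 / (σ ^ 2 * lam ^ 2)) * (Real.exp M * (lam / Z) ^ p) :=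
            mul_le_mul h1ω hexp (Real.exp_pos _).le (by positivity)
        _ = C2 * lam ^ q2 := by
            rw [hC2, hq2, Real.div_rpow hlam0.le hZ0pos.le, Real.rpow_sub hlam0,
              show lam ^ (2:ℝ) = lam ^ (2:ℕ) from Real.rpow_natCast lam 2]
            field_simp
    -- split the domain and bound each piece
    have hsplitdom : (∫⁻ lam in Ioi (1:ℝ),
          ENNReal.ofReal ((1 / ω lam) * Real.exp (∫ z in (1:ℝ)..lam, φ z / ω z)))
        ≤ (∫⁻ lam in Ioc (1:ℝ) Z,
            ENNReal.ofReal ((1 / ω lam) * Real.exp (∫ z in (1:ℝ)..lam, φ z / ω z)))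
          + (∫⁻ lam in Ioi Z,
            ENNReal.ofReal ((1 / ω lam) * Real.exp (∫ z in (1:ℝ)..lam, φ z / ω z))) := by
      rw [← Ioc_union_Ioi_eq_Ioi hZ1]
      exact lintegral_union_le _ _ _
    have hfin1 : (∫⁻ lam in Ioc (1:ℝ) Z,
        ENNReal.ofReal ((1 / ω lam) * Real.exp (∫ z in (1:ℝ)..lam, φ z / ω z))) < ⊤ := by
      calc (∫⁻ lam in Ioc (1:ℝ) Z,
            ENNReal.ofReal ((1 / ω lam) * Real.exp (∫ z in (1:ℝ)..lam, φ z / ω z)))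
          ≤ ∫⁻ _ in Ioc (1:ℝ) Z, ENNReal.ofReal ((1 / c) * Real.exp ((Z - 1) * B)) := by
            refine lintegral_mono_ae ?_
            rw [ae_restrict_iff' measurableSet_Ioc]
            exact ae_of_all _ fun lam hlam => ENNReal.ofReal_le_ofReal (hC1 lam hlam)
        _ = ENNReal.ofReal ((1 / c) * Real.exp ((Z - 1) * B)) * volume (Ioc (1:ℝ) Z) :=
            setLIntegral_const _ _
        _ < ⊤ := by
            rw [Real.volume_Ioc]
            exact ENNReal.mul_lt_top ENNReal.ofReal_lt_top ENNReal.ofReal_lt_top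
    have hfin2 : (∫⁻ lam in Ioi Z,
        ENNReal.ofReal ((1 / ω lam) * Real.exp (∫ z in (1:ℝ)..lam, φ z / ω z))) < ⊤ := by
      have hint : IntegrableOn (fun lam : ℝ => C2 * lam ^ q2) (Ioi Z) :=
        (integrableOn_Ioi_rpow_of_lt hq2lt hZ0pos).const_mul C2
      calc (∫⁻ lam in Ioi Z,
            ENNReal.ofReal ((1 / ω lam) * Real.exp (∫ z in (1:ℝ)..lam, φ z / ω z)))
          ≤ ∫⁻ lam in Ioi Z, ENNReal.ofReal (C2 * lam ^ q2) := by
            refine lintegral_mono_ae ?_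
            rw [ae_restrict_iff' measurableSet_Ioi]
            exact ae_of_all _ fun lam hlam => ENNReal.ofReal_le_ofReal (hC2bound lam hlam)
        _ < ⊤ := Integrable.lintegral_lt_top hint
    exact lt_of_le_of_lt hsplitdom (ENNReal.add_lt_top.mpr ⟨hfin1, hfin2⟩)
  constructor
  · intro htop
    by_contra hnot
    push_neg at hnot
    exact (hconv hnot).ne htop
  · exact hdiv
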